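/- For any two stochastic policies π and π' on a finite aperiodic unichain MDP, D_TV(d_{π'} ∥ d_π) ≤ ζ*·E_{s∼d_π}[D_TV(π'∥π)[s]], where ζ* = max_π ‖(I − P_π + P*_π)^{-1}‖_∞ is the maximal ∞-norm of the fundamental matrix over stationary policies. -/

import Mathlib

open Finset

/-- A stochastic policy. -/
def IsPolicy {S A : Type*} [Fintype A] (π : S → A → ℝ) : Prop :=
  (∀ s a, 0 ≤ π s a) ∧ ∀ s, ∑ a, π s a = 1

/-- State transition matrix induced by policy π. -/
def inducedMatrix {S A : Type*} [Fintype A] (P : S → A → S → ℝ) (π : S → A → ℝ) :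
    Matrix S S ℝ :=
  Matrix.of fun s s' => ∑ a, π s a * P s a s'

/-- Stationary distribution of the chain induced by a policy (unichain case,
so entries are only nonnegative). -/
def IsStationaryDist {S A : Type*} [Fintype S] [Fintype A]
    (P : S → A → S → ℝ) (π : S → A → ℝ) (d : S → ℝ) : Prop :=
  (∀ s, 0 ≤ d s) ∧ (∑ s, d s = 1) ∧
    ∀ s', ∑ s, d s * ∑ a, π s a * P s a s' = d s'

/-- ∞-operator norm (maximum absolute row sum) of the fundamental matrix
Z^π = (I − P_π + P*_π)⁻¹. -/
noncomputable def fundNorm {S : Type*} [Fintype S] [DecidableEq S] [Nonempty S]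
    (Pm : Matrix S S ℝ) (d : S → ℝ) : ℝ :=
  Finset.univ.sup' Finset.univ_nonempty
    (fun s => ∑ s', |((1 - Pm + (Matrix.of fun _ j => d j) : Matrix S S ℝ)⁻¹) s s'|)

/-- aperiodic unichain case:
D_TV(d_{π'} ∥ d_π) ≤ ζ*·E_{s∼d_π}[D_TV(π'∥π)[s]], where
ζ* = max_π ‖(I − P_π + P*_π)⁻¹‖_∞. -/
theorem stationary_distribution_tv_bound_unichain
    {S A : Type*} [Fintype S] [Fintype A] [DecidableEq S] [Nonempty S]
    (P : S → A → S → ℝ)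
    (hP_nonneg : ∀ s a s', 0 ≤ P s a s') (hP_sum : ∀ s a, ∑ s', P s a s' = 1)
    (π π' : S → A → ℝ) (hπ : IsPolicy π) (hπ' : IsPolicy π')
    (dπ dπ' : S → ℝ)
    (hd : IsStationaryDist P π dπ) (hd' : IsStationaryDist P π' dπ')
    -- fundamental matrices exist (aperiodic unichain)
    (hZ : ∀ p d, IsPolicy p → IsStationaryDist P p d →
      IsUnit (1 - inducedMatrix P p + Matrix.of fun _ s' => d s' : Matrix S S ℝ))
    -- ζ* = max_π ‖Z^π‖_∞ over stationary policies
    (ζstar : ℝ)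
    (hζ_ub : ∀ p d, IsPolicy p → IsStationaryDist P p d →
      fundNorm (inducedMatrix P p) d ≤ ζstar)
    (hζ_mem : ∃ p d, IsPolicy p ∧ IsStationaryDist P p d ∧
      fundNorm (inducedMatrix P p) d = ζstar) :
    (1 / 2) * ∑ s, |dπ' s - dπ s|
      ≤ ζstar * ∑ s, dπ s * ((1 / 2) * ∑ a, |π' s a - π s a|) := by
  obtain ⟨hπ_nn, hπ_sum⟩ := hπ
  obtain ⟨hπ'_nn, hπ'_sum⟩ := hπ'
  obtain ⟨hd_nn, hd_sum, hd_stat⟩ := hd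
  obtain ⟨hd'_nn, hd'_sum, hd'_stat⟩ := hd'
  set M : Matrix S S ℝ :=
    (1 - inducedMatrix P π' + Matrix.of fun _ s' => dπ' s') with hM
  have hMunit : IsUnit M := hZ π' dπ' ⟨hπ'_nn, hπ'_sum⟩ ⟨hd'_nn, hd'_sum, hd'_stat⟩
  have hMdet : IsUnit M.det := (Matrix.isUnit_iff_isUnit_det M).mp hMunit
  set u : S → ℝ := fun j => ∑ i, dπ i * (inducedMatrix P π i j - inducedMatrix P π' i j)
    with hu
  -- (dπ - dπ')ᵀ M = u
  have hA : Matrix.vecMul (fun i => dπ i - dπ' i) M = u := by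
    funext j
    simp only [Matrix.vecMul, dotProduct, hM, Matrix.add_apply, Matrix.sub_apply,
      Matrix.one_apply, Matrix.of_apply, hu]
    have e1 : ∀ i : S, (dπ i - dπ' i) *
        ((if i = j then (1:ℝ) else 0) - inducedMatrix P π' i j + dπ' j)
        = ((if i = j then (1:ℝ) else 0) * dπ i - dπ i * inducedMatrix P π' i j + dπ i * dπ' j)
          - ((if i = j then (1:ℝ) else 0) * dπ' i - dπ' i * inducedMatrix P π' i j
            + dπ' i * dπ' j) := by
      intro i; ring
    rw [Finset.sum_congr rfl fun i _ => e1 i, Finset.sum_sub_distrib,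
      Finset.sum_add_distrib, Finset.sum_add_distrib, Finset.sum_sub_distrib,
      Finset.sum_sub_distrib]
    have hdP : ∑ i, dπ i * inducedMatrix P π i j = dπ j := hd_stat j
    have hd'P : ∑ i, dπ' i * inducedMatrix P π' i j = dπ' j := hd'_stat j
    have h1 : ∑ i, (if i = j then (1:ℝ) else 0) * dπ i = dπ j := by
      simp [Finset.sum_ite_eq']
    have h2 : ∑ i, (if i = j then (1:ℝ) else 0) * dπ' i = dπ' j := by
      simp [Finset.sum_ite_eq']
    have h3 : ∑ i, dπ i * dπ' j = dπ' j := by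
      rw [← Finset.sum_mul, hd_sum, one_mul]
    have h4 : ∑ i, dπ' i * dπ' j = dπ' j := by
      rw [← Finset.sum_mul, hd'_sum, one_mul]
    have h5 : ∑ i, dπ i * (inducedMatrix P π i j - inducedMatrix P π' i j)
        = ∑ i, dπ i * inducedMatrix P π i j - ∑ i, dπ i * inducedMatrix P π' i j := by
      rw [← Finset.sum_sub_distrib]; exact Finset.sum_congr rfl fun i _ => by ring
    rw [h1, h2, h3, h4, h5, hdP, hd'P]
    ring
  -- invert: dπ - dπ' = u M⁻¹
  have hkey : ∀ k, dπ k - dπ' k = ∑ j, u j * M⁻¹ j k := by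
    intro k
    have := congrArg (fun v => Matrix.vecMul v M⁻¹) hA
    simp only [Matrix.vecMul_vecMul] at this
    rw [Matrix.mul_nonsing_inv M hMdet, Matrix.vecMul_one] at this
    have := congrFun this k
    simpa [Matrix.vecMul, dotProduct] using this
  set N : ℝ := fundNorm (inducedMatrix P π') dπ' with hN
  have hNrow : ∀ j : S, ∑ k, |M⁻¹ j k| ≤ N := by
    intro j
    exact Finset.le_sup' (fun s => ∑ s', |M⁻¹ s s'|) (Finset.mem_univ j)
  have hNζ : N ≤ ζstar := hζ_ub π' dπ' ⟨hπ'_nn, hπ'_sum⟩ ⟨hd'_nn, hd'_sum, hd'_stat⟩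
  -- bound on |u j| summed
  have hub : ∀ j, |u j| ≤ ∑ i, dπ i * |inducedMatrix P π i j - inducedMatrix P π' i j| := by
    intro j
    calc |u j| ≤ ∑ i, |dπ i * (inducedMatrix P π i j - inducedMatrix P π' i j)| :=
          Finset.abs_sum_le_sum_abs _ _
      _ = ∑ i, dπ i * |inducedMatrix P π i j - inducedMatrix P π' i j| := by
          exact Finset.sum_congr rfl fun i _ => by
            rw [abs_mul, abs_of_nonneg (hd_nn i)]
  have hrowdiff : ∀ i, ∑ j, |inducedMatrix P π i j - inducedMatrix P π' i j|
      ≤ ∑ a, |π' i a - π i a| := by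
    intro i
    have : ∀ j, |inducedMatrix P π i j - inducedMatrix P π' i j|
        ≤ ∑ a, |π' i a - π i a| * P i a j := by
      intro j
      have h0 : inducedMatrix P π i j - inducedMatrix P π' i j
          = ∑ a, (π i a - π' i a) * P i a j := by
        simp only [inducedMatrix, Matrix.of_apply, ← Finset.sum_sub_distrib]
        exact Finset.sum_congr rfl fun a _ => by ring
      rw [h0]
      calc |∑ a, (π i a - π' i a) * P i a j| ≤ ∑ a, |(π i a - π' i a) * P i a j| :=
            Finset.abs_sum_le_sum_abs _ _
        _ = ∑ a, |π' i a - π i a| * P i a j := by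
            exact Finset.sum_congr rfl fun a _ => by
              rw [abs_mul, abs_of_nonneg (hP_nonneg i a j), abs_sub_comm]
    calc ∑ j, |inducedMatrix P π i j - inducedMatrix P π' i j|
        ≤ ∑ j, ∑ a, |π' i a - π i a| * P i a j :=
          Finset.sum_le_sum fun j _ => this j
      _ = ∑ a, |π' i a - π i a| * ∑ j, P i a j := by
          rw [Finset.sum_comm]
          exact Finset.sum_congr rfl fun a _ => by rw [Finset.mul_sum]
      _ = ∑ a, |π' i a - π i a| := by
          exact Finset.sum_congr rfl fun a _ => by rw [hP_sum i a, mul_one]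
  set T : ℝ := ∑ i, dπ i * ∑ a, |π' i a - π i a| with hT
  have hsumu : ∑ j, |u j| ≤ T := by
    calc ∑ j, |u j|
        ≤ ∑ j, ∑ i, dπ i * |inducedMatrix P π i j - inducedMatrix P π' i j| :=
          Finset.sum_le_sum fun j _ => hub j
      _ = ∑ i, dπ i * ∑ j, |inducedMatrix P π i j - inducedMatrix P π' i j| := by
          rw [Finset.sum_comm]
          exact Finset.sum_congr rfl fun i _ => by rw [Finset.mul_sum]
      _ ≤ T := Finset.sum_le_sum fun i _ =>
          mul_le_mul_of_nonneg_left (hrowdiff i) (hd_nn i)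
  have hmain : ∑ k, |dπ' k - dπ k| ≤ N * T := by
    calc ∑ k, |dπ' k - dπ k| = ∑ k, |∑ j, u j * M⁻¹ j k| := by
          exact Finset.sum_congr rfl fun k _ => by rw [abs_sub_comm, hkey k]
      _ ≤ ∑ k, ∑ j, |u j| * |M⁻¹ j k| := by
          refine Finset.sum_le_sum fun k _ => ?_
          calc |∑ j, u j * M⁻¹ j k| ≤ ∑ j, |u j * M⁻¹ j k| :=
                Finset.abs_sum_le_sum_abs _ _
            _ = ∑ j, |u j| * |M⁻¹ j k| :=
                Finset.sum_congr rfl fun j _ => abs_mul _ _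
      _ = ∑ j, |u j| * ∑ k, |M⁻¹ j k| := by
          rw [Finset.sum_comm]
          exact Finset.sum_congr rfl fun j _ => by rw [Finset.mul_sum]
      _ ≤ ∑ j, |u j| * N :=
          Finset.sum_le_sum fun j _ =>
            mul_le_mul_of_nonneg_left (hNrow j) (abs_nonneg _)
      _ = N * ∑ j, |u j| := by rw [← Finset.sum_mul]; ring
      _ ≤ N * T := by
          have hN0 : 0 ≤ N := le_trans (abs_nonneg _)
            (le_trans (Finset.single_le_sum (fun k _ => abs_nonneg (M⁻¹ (Classical.arbitrary S) k)) (Finset.mem_univ (Classical.arbitrary S))) (hNrow _))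
          exact mul_le_mul_of_nonneg_left hsumu hN0
  have hT0 : 0 ≤ T := Finset.sum_nonneg fun i _ =>
    mul_nonneg (hd_nn i) (Finset.sum_nonneg fun a _ => abs_nonneg _)
  have hinner : ∑ s, dπ s * ((1 / 2) * ∑ a, |π' s a - π s a|) = (1/2) * T := by
    rw [hT, Finset.mul_sum]
    exact Finset.sum_congr rfl fun s _ => by ring
  rw [hinner]
  calc (1/2) * ∑ s, |dπ' s - dπ s| ≤ (1/2) * (N * T) := by linarith
    _ = N * ((1/2) * T) := by ring
    _ ≤ ζstar * ((1/2) * T) :=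
        mul_le_mul_of_nonneg_right hNζ (by linarith)
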